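/- If ξ is reachable at time N+1 from x for the system x(k+1) = A(k)x(k) + B(k)u(k), then the equation Φ(0,N)x − G(0)λ = ξ has a solution λ* ∈ ℝⁿ, where Φ(0,N) = A_c(N)···A_c(0) is the closed-loop transition matrix, A_c(k) = A(k) + B(k)K(k), K(k) is the Riccati feedback gain, and G(0) = Σ_{j=0}^{N} Φ(j+1,N) B(j)Γ(j)⁻¹B(j)' Φ(j+1,N)' is the closed-loop weighted Gramian. -/

import Mathlib

open Matrix

/-- `transMat A N k` is the product `A(N) * A(N-1) * ⋯ * A(k)` for `k ≤ N`,
and the identity matrix for `k > N`. -/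
noncomputable def transMat {n : ℕ} (A : ℕ → Matrix (Fin n) (Fin n) ℝ) (N : ℕ) (k : ℕ) :
    Matrix (Fin n) (Fin n) ℝ :=
  if _ : k ≤ N then transMat A N (k + 1) * A k else 1
termination_by N + 1 - k
decreasing_by omega

lemma transMat_of_le {n : ℕ} (A : ℕ → Matrix (Fin n) (Fin n) ℝ) {N k : ℕ} (h : k ≤ N) :
    transMat A N k = transMat A N (k + 1) * A k := by
  rw [transMat]; simp [h]

lemma transMat_of_gt {n : ℕ} (A : ℕ → Matrix (Fin n) (Fin n) ℝ) {N k : ℕ} (h : N < k) :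
    transMat A N k = 1 := by
  rw [transMat]; simp [Nat.not_le.mpr h]

lemma aux_mem_range_of_ker {n : ℕ} (G : Matrix (Fin n) (Fin n) ℝ) (hsym : Gᵀ = G)
    (b : Fin n → ℝ) (hb : ∀ w, G *ᵥ w = 0 → b ⬝ᵥ w = 0) : ∃ lam, G *ᵥ lam = b := by
  classical
  set T : EuclideanSpace ℝ (Fin n) →ₗ[ℝ] EuclideanSpace ℝ (Fin n) := Matrix.toEuclideanLin G
    with hT
  have hTapp : ∀ v : EuclideanSpace ℝ (Fin n), T v = G *ᵥ (v : Fin n → ℝ) := by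
    intro v; rfl
  have hinner : ∀ x y : EuclideanSpace ℝ (Fin n), (inner ℝ x y : ℝ) = (x : Fin n → ℝ) ⬝ᵥ y := by
    intro x y
    simp [PiLp.inner_apply, dotProduct, mul_comm]
  have hle : LinearMap.range T ≤ (LinearMap.ker T)ᗮ := by
    rintro y ⟨x, rfl⟩
    intro u hu
    have hu' : G *ᵥ (u : Fin n → ℝ) = 0 := by
      have h0 := congrArg WithLp.ofLp (LinearMap.mem_ker.mp hu)
      rw [hTapp, WithLp.ofLp_zero] at h0; exact h0
    rw [hinner, hTapp]
    calc (u : Fin n → ℝ) ⬝ᵥ (G *ᵥ x) = ((u : Fin n → ℝ) ᵥ* G) ⬝ᵥ x := by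
          rw [dotProduct_mulVec]
      _ = (Gᵀ *ᵥ (u : Fin n → ℝ)) ⬝ᵥ x := by rw [Matrix.mulVec_transpose]
      _ = 0 := by rw [hsym, hu']; simp
  have hfin : Module.finrank ℝ (LinearMap.range T) = Module.finrank ℝ (LinearMap.ker T)ᗮ := by
    have h1 := LinearMap.finrank_range_add_finrank_ker T
    have h2 := Submodule.finrank_add_finrank_orthogonal (K := LinearMap.ker T)
    omega
  have heq := Submodule.eq_of_le_of_finrank_eq hle hfin
  have hbmem : (WithLp.toLp 2 b : EuclideanSpace ℝ (Fin n)) ∈ (LinearMap.ker T)ᗮ := by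
    intro u hu
    have hu' : G *ᵥ (u : Fin n → ℝ) = 0 := by
      have h0 := congrArg WithLp.ofLp (LinearMap.mem_ker.mp hu)
      rw [hTapp, WithLp.ofLp_zero] at h0; exact h0
    rw [hinner, dotProduct_comm]
    exact hb _ hu'
  rw [← heq] at hbmem
  obtain ⟨x, hx⟩ := hbmem
  exact ⟨x.ofLp, by rw [← hTapp, hx]⟩

lemma riccati_completion {n m : ℕ} (A P Q : Matrix (Fin n) (Fin n) ℝ)
    (Bm : Matrix (Fin n) (Fin m) ℝ) (R Γ : Matrix (Fin m) (Fin m) ℝ)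
    (hΓ : Γ = R + Bmᵀ * P * Bm) (hPsym : Pᵀ = P) (hWsym : (Γ⁻¹)ᵀ = Γ⁻¹)
    (hGi : Γ * Γ⁻¹ = 1) :
    (A + Bm * -(Γ⁻¹ * (Bmᵀ * P * A)))ᵀ * P * (A + Bm * -(Γ⁻¹ * (Bmᵀ * P * A))) + Q
      + (-(Γ⁻¹ * (Bmᵀ * P * A)))ᵀ * R * (-(Γ⁻¹ * (Bmᵀ * P * A)))
      = Aᵀ * P * A + Q - Aᵀ * P * Bm * Γ⁻¹ * (Bmᵀ * P * A) := by
  have hmid : Bmᵀ * (P * (Bm * (Γ⁻¹ * (Bmᵀ * (P * A)))))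
      = Bmᵀ * (P * A) - R * (Γ⁻¹ * (Bmᵀ * (P * A))) := by
    have : Bmᵀ * P * Bm = Γ - R := by rw [hΓ]; abel
    calc Bmᵀ * (P * (Bm * (Γ⁻¹ * (Bmᵀ * (P * A)))))
        = (Bmᵀ * P * Bm) * (Γ⁻¹ * (Bmᵀ * (P * A))) := by
          simp only [Matrix.mul_assoc]
      _ = (Γ - R) * (Γ⁻¹ * (Bmᵀ * (P * A))) := by rw [this]
      _ = Γ * Γ⁻¹ * (Bmᵀ * (P * A)) - R * (Γ⁻¹ * (Bmᵀ * (P * A))) := by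
          simp only [Matrix.sub_mul, Matrix.mul_assoc]
      _ = Bmᵀ * (P * A) - R * (Γ⁻¹ * (Bmᵀ * (P * A))) := by rw [hGi, Matrix.one_mul]
  simp only [Matrix.transpose_add, Matrix.transpose_neg, Matrix.transpose_mul, hWsym, hPsym,
    Matrix.add_mul, Matrix.mul_add, Matrix.neg_mul, Matrix.mul_neg, neg_neg,
    Matrix.mul_assoc, hmid]
  simp only [Matrix.mul_sub, Matrix.mul_add, Matrix.mul_assoc]
  abel

lemma aux_mulVec_dot {n p : ℕ} (M : Matrix (Fin n) (Fin p) ℝ) (x : Fin p → ℝ) (y : Fin n → ℝ) :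
    (M *ᵥ x) ⬝ᵥ y = x ⬝ᵥ (Mᵀ *ᵥ y) := by
  rw [dotProduct_comm, Matrix.dotProduct_mulVec, ← Matrix.mulVec_transpose, dotProduct_comm]

lemma aux_dot_conj {n p : ℕ} (M : Matrix (Fin n) (Fin p) ℝ) (W : Matrix (Fin p) (Fin p) ℝ)
    (w : Fin n → ℝ) :
    w ⬝ᵥ ((M * W * Mᵀ) *ᵥ w) = (Mᵀ *ᵥ w) ⬝ᵥ (W *ᵥ (Mᵀ *ᵥ w)) := by
  rw [← Matrix.mulVec_mulVec, ← Matrix.mulVec_mulVec, Matrix.dotProduct_mulVec,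
    ← Matrix.mulVec_transpose]

lemma aux_sum_mulVec {n p : ℕ} (s : Finset ℕ) (f : ℕ → Matrix (Fin n) (Fin p) ℝ)
    (w : Fin p → ℝ) : (∑ j ∈ s, f j) *ᵥ w = ∑ j ∈ s, f j *ᵥ w := by
  induction s using Finset.cons_induction with
  | empty => simp
  | cons a s ha ih => rw [Finset.sum_cons, Finset.sum_cons, Matrix.add_mulVec, ih]

lemma aux_dot_sum {p : ℕ} (s : Finset ℕ) (g : ℕ → Fin p → ℝ) (w : Fin p → ℝ) :
    w ⬝ᵥ (∑ j ∈ s, g j) = ∑ j ∈ s, w ⬝ᵥ g j := by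
  induction s using Finset.cons_induction with
  | empty => simp
  | cons a s ha ih => rw [Finset.sum_cons, Finset.sum_cons, dotProduct_add, ih]

lemma aux_sum_dot {p : ℕ} (s : Finset ℕ) (g : ℕ → Fin p → ℝ) (w : Fin p → ℝ) :
    (∑ j ∈ s, g j) ⬝ᵥ w = ∑ j ∈ s, g j ⬝ᵥ w := by
  induction s using Finset.cons_induction with
  | empty => simp
  | cons a s ha ih => rw [Finset.sum_cons, Finset.sum_cons, add_dotProduct, ih]

/-- If `ξ` is reachable at time `N+1` from `x0`, then the terminal-constraint
equation `Φ(0,N) x − G(0) λ = ξ` for the closed-loop transition matrix and the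
closed-loop weighted Gramian has a solution `λ*`. -/
theorem terminal_constraint_solvable {n m N : ℕ}
    (A : ℕ → Matrix (Fin n) (Fin n) ℝ) (B : ℕ → Matrix (Fin n) (Fin m) ℝ)
    (Q H : Matrix (Fin n) (Fin n) ℝ) (R : Matrix (Fin m) (Fin m) ℝ)
    (hQ : Q.PosSemidef) (hH : H.PosSemidef) (hR : R.PosDef)
    (P : ℕ → Matrix (Fin n) (Fin n) ℝ)
    (hPterm : P (N + 1) = H)
    (hP : ∀ k ≤ N, P k
        = (A k)ᵀ * P (k + 1) * A k + Q
          - (A k)ᵀ * P (k + 1) * B k * (R + (B k)ᵀ * P (k + 1) * B k)⁻¹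
              * ((B k)ᵀ * P (k + 1) * A k))
    (Γ : ℕ → Matrix (Fin m) (Fin m) ℝ)
    (hΓ : ∀ k ≤ N, Γ k = R + (B k)ᵀ * P (k + 1) * B k)
    (K : ℕ → Matrix (Fin m) (Fin n) ℝ)
    (hK : ∀ k ≤ N, K k = -((Γ k)⁻¹ * ((B k)ᵀ * P (k + 1) * A k)))
    (Ac : ℕ → Matrix (Fin n) (Fin n) ℝ)
    (hAc : ∀ k ≤ N, Ac k = A k + B k * K k)
    (x0 ξ : Fin n → ℝ)
    (hreach : ∃ (x : ℕ → Fin n → ℝ) (u : ℕ → Fin m → ℝ),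
        x 0 = x0 ∧ (∀ k ≤ N, x (k + 1) = A k *ᵥ x k + B k *ᵥ u k)
          ∧ x (N + 1) = ξ) :
    ∃ lam : Fin n → ℝ,
      transMat Ac N 0 *ᵥ x0
        - (∑ j ∈ Finset.Icc 0 N,
            transMat Ac N (j + 1) * (B j * (Γ j)⁻¹ * (B j)ᵀ)
              * (transMat Ac N (j + 1))ᵀ) *ᵥ lam = ξ := by
  classical
  obtain ⟨x, u, hx0, hdyn, hxN⟩ := hreach
  -- Γ is positive definite whenever P (k+1) is PSD
  have hΓpd_of : ∀ k ≤ N, (P (k + 1)).PosSemidef → (Γ k).PosDef := by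
    intro k hk hPk
    rw [hΓ k hk]
    have h2 : ((B k)ᵀ * P (k + 1) * ((B k)ᵀ)ᴴ).PosSemidef :=
      hPk.mul_mul_conjTranspose_same (B k)ᵀ
    rw [Matrix.conjTranspose_eq_transpose_of_trivial, Matrix.transpose_transpose] at h2
    exact hR.add_posSemidef h2
  -- PSD of P by backward induction
  have hPSDaux : ∀ j : ℕ, (P (N + 1 - j)).PosSemidef := by
    intro j
    induction j with
    | zero => simpa [hPterm] using hH
    | succ j ih =>
      by_cases hj : j ≤ N
      · set k := N - j with hkdef
        have hk : k ≤ N := by omega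
        have hk1 : N + 1 - j = k + 1 := by omega
        have hk2 : N + 1 - (j + 1) = k := by omega
        rw [hk1] at ih
        have hΓpd : (Γ k).PosDef := hΓpd_of k hk ih
        have hΓsym : (Γ k)ᵀ = Γ k := by
          have := hΓpd.isHermitian
          rwa [Matrix.IsHermitian, Matrix.conjTranspose_eq_transpose_of_trivial] at this
        have hΓinvsym : ((Γ k)⁻¹)ᵀ = (Γ k)⁻¹ := by
          rw [Matrix.transpose_nonsing_inv, hΓsym]
        have hPsym : (P (k + 1))ᵀ = P (k + 1) := by
          have := ih.isHermitian
          rwa [Matrix.IsHermitian, Matrix.conjTranspose_eq_transpose_of_trivial] at this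
        have hGi : Γ k * (Γ k)⁻¹ = 1 := Matrix.mul_nonsing_inv _ (hΓpd.det_pos.ne'.isUnit)
        have hsq : P k = (Ac k)ᵀ * P (k + 1) * Ac k + Q + (K k)ᵀ * R * K k := by
          rw [hAc k hk, hK k hk, hP k hk, ← hΓ k hk]
          exact (riccati_completion (A k) (P (k + 1)) Q (B k) R (Γ k) (hΓ k hk) hPsym
            hΓinvsym hGi).symm
        have hPSDk : (P k).PosSemidef := by
          rw [hsq]
          have h1 : (((Ac k))ᴴ * P (k + 1) * Ac k).PosSemidef :=
            ih.conjTranspose_mul_mul_same (Ac k)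
          rw [Matrix.conjTranspose_eq_transpose_of_trivial] at h1
          have h2 : (((K k))ᴴ * R * K k).PosSemidef :=
            hR.posSemidef.conjTranspose_mul_mul_same (K k)
          rw [Matrix.conjTranspose_eq_transpose_of_trivial] at h2
          exact (h1.add hQ).add h2
        rw [hk2]
        exact hPSDk
      · have : N + 1 - (j + 1) = N + 1 - j := by omega
        rw [this]; exact ih
  have hPSD : ∀ k ≤ N + 1, (P k).PosSemidef := by
    intro k hk
    have := hPSDaux (N + 1 - k)
    rwa [Nat.sub_sub_self hk] at this
  have hΓpd : ∀ k ≤ N, (Γ k).PosDef := fun k hk =>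
    hΓpd_of k hk (hPSD (k + 1) (by omega))
  have hΓinvpd : ∀ k ≤ N, ((Γ k)⁻¹).PosDef := fun k hk => (hΓpd k hk).inv
  have hΓinvsym : ∀ k ≤ N, ((Γ k)⁻¹)ᵀ = (Γ k)⁻¹ := by
    intro k hk
    have := (hΓinvpd k hk).isHermitian
    rwa [Matrix.IsHermitian, Matrix.conjTranspose_eq_transpose_of_trivial] at this
  -- closed-loop rewriting of dynamics
  set v : ℕ → Fin m → ℝ := fun j => u j - K j *ᵥ x j with hv
  have hstep : ∀ k ≤ N, x (k + 1) = Ac k *ᵥ x k + B k *ᵥ v k := by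
    intro k hk
    rw [hdyn k hk, hAc k hk, hv]
    simp only [Matrix.add_mulVec, Matrix.mulVec_sub, ← Matrix.mulVec_mulVec]
    abel
  -- expansion of x (N+1)
  have hexp : ∀ d : ℕ, d ≤ N + 1 →
      x (N + 1) = transMat Ac N (N + 1 - d) *ᵥ x (N + 1 - d)
        + ∑ j ∈ Finset.Icc (N + 1 - d) N, transMat Ac N (j + 1) *ᵥ (B j *ᵥ v j) := by
    intro d
    induction d with
    | zero =>
      intro _
      rw [Nat.sub_zero, transMat_of_gt Ac (by omega), Finset.Icc_eq_empty (by omega)]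
      simp
    | succ d ih =>
      intro hd
      have ih' := ih (by omega)
      set t := N - d with ht
      have h1 : N + 1 - d = t + 1 := by omega
      have h2 : N + 1 - (d + 1) = t := by omega
      have htN : t ≤ N := by omega
      rw [h1] at ih'
      rw [h2]
      rw [hstep t htN] at ih'
      have hins : Finset.Icc t N = insert t (Finset.Icc (t + 1) N) := by
        ext z; simp only [Finset.mem_Icc, Finset.mem_insert]; omega
      rw [ih', hins, Finset.sum_insert (by simp)]
      rw [Matrix.mulVec_add, Matrix.mulVec_mulVec, ← transMat_of_le Ac htN]
      abel
  have hfinal := hexp (N + 1) le_rfl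
  rw [Nat.sub_self, hx0, hxN] at hfinal
  -- the Gramian
  set G0 : Matrix (Fin n) (Fin n) ℝ :=
    ∑ j ∈ Finset.Icc 0 N, transMat Ac N (j + 1) * (B j * (Γ j)⁻¹ * (B j)ᵀ)
      * (transMat Ac N (j + 1))ᵀ with hG0
  have hGsym : G0ᵀ = G0 := by
    rw [hG0, Matrix.transpose_sum]
    refine Finset.sum_congr rfl fun j hj => ?_
    have hjN : j ≤ N := (Finset.mem_Icc.mp hj).2
    simp [Matrix.transpose_mul, Matrix.transpose_transpose, hΓinvsym j hjN, Matrix.mul_assoc]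
  -- orthogonality condition
  have hborth : ∀ w, G0 *ᵥ w = 0 → (transMat Ac N 0 *ᵥ x0 - ξ) ⬝ᵥ w = 0 := by
    intro w hw
    have hzero : ∀ j ∈ Finset.Icc 0 N,
        ((transMat Ac N (j + 1) * B j)ᵀ *ᵥ w) = 0 := by
      have hsum : ∑ j ∈ Finset.Icc 0 N,
          w ⬝ᵥ ((transMat Ac N (j + 1) * (B j * (Γ j)⁻¹ * (B j)ᵀ)
            * (transMat Ac N (j + 1))ᵀ) *ᵥ w) = 0 := by
        have : w ⬝ᵥ (G0 *ᵥ w) = 0 := by rw [hw]; simp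
        rw [hG0, aux_sum_mulVec, aux_dot_sum] at this
        exact this
      have hterm : ∀ j ∈ Finset.Icc 0 N,
          w ⬝ᵥ ((transMat Ac N (j + 1) * (B j * (Γ j)⁻¹ * (B j)ᵀ)
            * (transMat Ac N (j + 1))ᵀ) *ᵥ w)
          = ((transMat Ac N (j + 1) * B j)ᵀ *ᵥ w) ⬝ᵥ
              ((Γ j)⁻¹ *ᵥ ((transMat Ac N (j + 1) * B j)ᵀ *ᵥ w)) := by
        intro j hj
        have hrw : transMat Ac N (j + 1) * (B j * (Γ j)⁻¹ * (B j)ᵀ)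
            * (transMat Ac N (j + 1))ᵀ
            = (transMat Ac N (j + 1) * B j) * (Γ j)⁻¹ * (transMat Ac N (j + 1) * B j)ᵀ := by
          simp only [Matrix.transpose_mul, Matrix.mul_assoc]
        rw [hrw, aux_dot_conj]
      have hnonneg : ∀ j ∈ Finset.Icc 0 N,
          0 ≤ w ⬝ᵥ ((transMat Ac N (j + 1) * (B j * (Γ j)⁻¹ * (B j)ᵀ)
            * (transMat Ac N (j + 1))ᵀ) *ᵥ w) := by
        intro j hj
        rw [hterm j hj]
        have hjN : j ≤ N := (Finset.mem_Icc.mp hj).2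
        have := ((hΓinvpd j hjN).posSemidef).dotProduct_mulVec_nonneg ((transMat Ac N (j + 1) * B j)ᵀ *ᵥ w)
        simpa using this
      intro j hj
      have hjz : w ⬝ᵥ ((transMat Ac N (j + 1) * (B j * (Γ j)⁻¹ * (B j)ᵀ)
          * (transMat Ac N (j + 1))ᵀ) *ᵥ w) = 0 :=
        (Finset.sum_eq_zero_iff_of_nonneg hnonneg).mp hsum j hj
      rw [hterm j hj] at hjz
      by_contra hne
      have hjN : j ≤ N := (Finset.mem_Icc.mp hj).2
      have := (hΓinvpd j hjN).dotProduct_mulVec_pos (x := (transMat Ac N (j + 1) * B j)ᵀ *ᵥ w) hne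
      simp only [star_trivial] at this
      exact absurd hjz (ne_of_gt this)
    have hb : transMat Ac N 0 *ᵥ x0 - ξ
        = -∑ j ∈ Finset.Icc 0 N, transMat Ac N (j + 1) *ᵥ (B j *ᵥ v j) := by
      rw [hfinal]; abel
    rw [hb, neg_dotProduct, aux_sum_dot]
    have : ∀ j ∈ Finset.Icc 0 N,
        (transMat Ac N (j + 1) *ᵥ (B j *ᵥ v j)) ⬝ᵥ w = 0 := by
      intro j hj
      rw [Matrix.mulVec_mulVec, aux_mulVec_dot, hzero j hj]
      simp
    rw [Finset.sum_congr rfl this]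
    simp
  obtain ⟨lam, hlam⟩ := aux_mem_range_of_ker G0 hGsym _ hborth
  exact ⟨lam, by rw [hlam, sub_sub_cancel]⟩
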